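/- Let G be a (P_1 + P_3)-free graph with at least one vertex. Then the vertex set of G can be partitioned into nonempty sets D_1, …, D_p (for some p ≥ 1) such that for every i the subgraph of G induced by D_i is either 3P_1-free (has no independent set of size 3) or a disjoint union of complete graphs, and for all i ≠ j every vertex of D_i is adjacent to every vertex of D_j. -/

import Mathlib

open SimpleGraph

/-- Olariu-style key lemma (complement form): in a connected "paw-free" graph
containing a triangle, there is no induced `K₂ ∪ K₁`. -/
lemma paw_key {W : Type*} (H : SimpleGraph W)
    (hpaw : ∀ a b c x : W, H.Adj a b → H.Adj b c → H.Adj a c →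
      H.Adj x a → ¬H.Adj x b → ¬H.Adj x c → False)
    (hconn : H.Connected)
    {t₁ t₂ t₃ : W} (ht12 : H.Adj t₁ t₂) (ht23 : H.Adj t₂ t₃) (ht13 : H.Adj t₁ t₃) :
    ∀ u v w : W, H.Adj u v → ¬H.Adj w u → ¬H.Adj w v → w ≠ u → w ≠ v → False := by
  -- every vertex adjacent to a triangle vertex is in a triangle
  have step : ∀ s y : W, H.Adj s y →
      (∃ a b, H.Adj s a ∧ H.Adj a b ∧ H.Adj s b) →
      (∃ a b, H.Adj y a ∧ H.Adj a b ∧ H.Adj y b) := by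
    intro s y hsy ⟨x₁, x₂, h1, h12, h2⟩
    by_cases hy1 : H.Adj y x₁
    · exact ⟨s, x₁, hsy.symm, h1, hy1⟩
    by_cases hy2 : H.Adj y x₂
    · exact ⟨s, x₂, hsy.symm, h2, hy2⟩
    exact absurd (hpaw s x₁ x₂ y h1 h12 h2 hsy.symm hy1 hy2) not_false
  -- every vertex is in a triangle
  have tri' : ∀ (s z : W) (_ : H.Walk s z),
      (∃ a b, H.Adj s a ∧ H.Adj a b ∧ H.Adj s b) →
      ∃ a b, H.Adj z a ∧ H.Adj a b ∧ H.Adj z b := by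
    intro s z p
    induction p with
    | nil => exact id
    | cons h q ih => exact fun hs => ih (step _ _ h hs)
  have tri : ∀ z : W, ∃ a b, H.Adj z a ∧ H.Adj a b ∧ H.Adj z b := by
    intro z
    exact tri' t₁ z ((hconn t₁ z).some) ⟨t₂, t₃, ht12, ht23, ht13⟩
  -- no vertex is nonadjacent to a whole triangle
  have L4 : ∀ n : ℕ, ∀ a b c w : W, H.Adj a b → H.Adj b c → H.Adj a c →
      ¬H.Adj w a → ¬H.Adj w b → ¬H.Adj w c →
      ∀ p : H.Walk w a, p.length = n → False := by
    intro n
    induction n using Nat.strong_induction_on with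
    | _ n ih =>
      intro a b c w hab hbc hac hwa hwb hwc p hp
      match n, hp with
      | 0, hp =>
        have hwa' : w = a := Walk.eq_of_length_eq_zero hp
        exact hwb (hwa' ▸ hab)
      | (m+1), hp =>
        have hr : p.reverse.length = m + 1 := by simpa using hp
        rcases hpr : p.reverse with _ | ⟨h, q⟩
        · rw [hpr] at hr; simp at hr
        · rename_i y
          rw [hpr] at hr
          simp only [Walk.length_cons] at hr
          have hq : q.reverse.length = m := by simpa using Nat.succ_injective hr
          by_cases hyb : H.Adj y b
          · by_cases hwy : H.Adj w y
            · exact hpaw y a b w h.symm hab hyb hwy hwa hwb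
            · exact ih m (Nat.lt_succ_self m) y a b w h.symm hab hyb hwy hwa hwb
                q.reverse hq
          by_cases hyc : H.Adj y c
          · by_cases hwy : H.Adj w y
            · exact hpaw y a c w h.symm hac hyc hwy hwa hwc
            · exact ih m (Nat.lt_succ_self m) y a c w h.symm hac hyc hwy hwa hwc
                q.reverse hq
          exact hpaw a b c y hab hbc hac h.symm hyb hyc
  intro u v w huv hwu hwv hwu' hwv'
  obtain ⟨x₁, x₂, hux1, hx12, hux2⟩ := tri u
  have hvx : ∃ x, H.Adj v x ∧ H.Adj u x := by
    by_cases hv1 : H.Adj v x₁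
    · exact ⟨x₁, hv1, hux1⟩
    by_cases hv2 : H.Adj v x₂
    · exact ⟨x₂, hv2, hux2⟩
    exact absurd (hpaw u x₁ x₂ v hux1 hx12 hux2 huv.symm hv1 hv2) not_false
  obtain ⟨x, hvx, hux⟩ := hvx
  by_cases hwx : H.Adj w x
  · exact hpaw x u v w hux.symm huv hvx.symm hwx hwu hwv
  · exact L4 ((hconn w u).some.length) u v x w huv hvx hux hwu hwv hwx
      (hconn w u).some rfl

/-- `(P₁ + P₃)`-freeness in concrete form. -/
lemma no_p1p3 {V : Type*} (G : SimpleGraph V)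
    (hfree : IsEmpty ((((⊥ : SimpleGraph (Fin 1)) ⊕g pathGraph 3)) ↪g G))
    {a b x c : V} (hbx : G.Adj b x) (hxc : G.Adj x c) (hbc : ¬G.Adj b c)
    (hab : ¬G.Adj a b) (hax : ¬G.Adj a x) (hac : ¬G.Adj a c)
    (hab' : a ≠ b) (hax' : a ≠ x) (hac' : a ≠ c) (hbc' : b ≠ c) : False := by
  apply hfree.false
  have hbx' : b ≠ x := hbx.ne
  have hxc' : x ≠ c := hxc.ne
  have hba : ¬G.Adj b a := fun h => hab h.symm
  have hxa : ¬G.Adj x a := fun h => hax h.symm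
  have hca : ¬G.Adj c a := fun h => hac h.symm
  have hcb : ¬G.Adj c b := fun h => hbc h.symm
  refine ⟨⟨Sum.elim (fun _ => a) ![b, x, c], ?_⟩, ?_⟩
  · rintro (s | s) (t | t) h <;>
      simp only [Sum.elim_inl, Sum.elim_inr] at h
    · simp [Subsingleton.elim s t]
    · exfalso; fin_cases t <;> simp_all
    · exfalso; fin_cases s <;> simp_all
    · congr 1; fin_cases s <;> fin_cases t <;> simp_all
  · rintro (s | s) (t | t) <;> erw [Function.Embedding.coeFn_mk] <;>
      simp only [Function.Embedding.coeFn_mk, Sum.elim_inl, Sum.elim_inr, sum_adj,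
        pathGraph_adj, bot_adj]
    · simp
    · fin_cases t <;> simp [hab, hax, hac]
    · fin_cases s <;> simp [hba, hxa, hca]
    · fin_cases s <;> fin_cases t <;>
        simp [hbx, hxc, hbc, hbx.symm, hxc.symm, hcb]

theorem stmt_13 {V : Type*} [Fintype V] [Nonempty V] (G : SimpleGraph V)
    (hfree : IsEmpty ((((⊥ : SimpleGraph (Fin 1)) ⊕g pathGraph 3)) ↪g G)) :
    ∃ (p : ℕ) (_ : 1 ≤ p) (D : Fin p → Set V),
      (∀ i, (D i).Nonempty) ∧
      (Pairwise fun i j => Disjoint (D i) (D j)) ∧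
      (⋃ i, D i) = Set.univ ∧
      (∀ i, IsEmpty ((⊥ : SimpleGraph (Fin 3)) ↪g G.induce (D i)) ∨
        ∀ c : (G.induce (D i)).ConnectedComponent, (G.induce (D i)).IsClique c.supp) ∧
      (∀ i j, i ≠ j → ∀ a ∈ D i, ∀ b ∈ D j, G.Adj a b) := by
  classical
  set K := Gᶜ with hK
  haveI : Finite K.ConnectedComponent := Quot.finite _
  haveI : Fintype K.ConnectedComponent := Fintype.ofFinite _
  haveI : Nonempty K.ConnectedComponent :=
    ⟨K.connectedComponentMk (Classical.arbitrary V)⟩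
  set p := Fintype.card K.ConnectedComponent with hp
  let e : Fin p ≃ K.ConnectedComponent := (Fintype.equivFin K.ConnectedComponent).symm
  refine ⟨p, Fintype.card_pos, fun i => (e i).supp, ?_, ?_, ?_, ?_, ?_⟩
  · intro i
    obtain ⟨v, hv⟩ := (e i).exists_rep
    exact ⟨v, by rw [ConnectedComponent.mem_supp_iff]; exact hv⟩
  · intro i j hij
    exact K.pairwise_disjoint_supp_connectedComponent (e.injective.ne hij)
  · rw [e.surjective.iUnion_comp (fun c => c.supp)]
    exact K.iUnion_connectedComponentSupp
  · intro i
    set D : Set V := (e i).supp with hD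
    set J := G.induce D with hJ
    by_cases htrip : ∃ x y z : ↥D, x ≠ y ∧ x ≠ z ∧ y ≠ z ∧
        ¬J.Adj x y ∧ ¬J.Adj x z ∧ ¬J.Adj y z
    · right
      obtain ⟨x, y, z, hxy, hxz, hyz, nxy, nxz, nyz⟩ := htrip
      set H := Jᶜ with hH
      -- H is paw-free
      have hpaw : ∀ a b c x : ↥D, H.Adj a b → H.Adj b c → H.Adj a c →
          H.Adj x a → ¬H.Adj x b → ¬H.Adj x c → False := by
        intro a b c x hab hbc hac hxa hxb hxc
        rw [compl_adj] at hab hbc hac hxa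
        have hxb' : x ≠ b := by
          rintro rfl; exact hxc (by rw [compl_adj]; exact ⟨hbc.1, hbc.2⟩)
        have hxc' : x ≠ c := by
          rintro rfl; exact hxb (by rw [compl_adj]; exact ⟨(hbc.1).symm, fun h => hbc.2 h.symm⟩)
        have hGxb : J.Adj x b := by
          by_contra hcon; exact hxb (by rw [compl_adj]; exact ⟨hxb', hcon⟩)
        have hGxc : J.Adj x c := by
          by_contra hcon; exact hxc (by rw [compl_adj]; exact ⟨hxc', hcon⟩)
        have hco : ∀ u v : ↥D, J.Adj u v → G.Adj ↑u ↑v := fun u v h => h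
        have hnco : ∀ u v : ↥D, ¬J.Adj u v → ¬G.Adj ↑u ↑v := fun u v h hc => h hc
        exact no_p1p3 G hfree (G.adj_symm (hco _ _ hGxb)) (hco _ _ hGxc)
          (hnco _ _ hbc.2) (hnco _ _ hab.2) (hnco _ _ (fun h => hxa.2 h.symm))
          (hnco _ _ hac.2)
          (fun h => hab.1 (Subtype.coe_injective h))
          (fun h => hxa.1 (Subtype.coe_injective h).symm)
          (fun h => hac.1 (Subtype.coe_injective h))
          (fun h => hbc.1 (Subtype.coe_injective h))
      -- H is connected
      have heq : H = K.induce D := by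
        ext ⟨a, ha⟩ ⟨b, hb⟩
        simp only [hH, compl_adj, comap_adj, Function.Embedding.coe_subtype, hK, ne_eq,
          Subtype.mk.injEq]
        rfl
      have hconn : H.Connected := by
        rw [heq]
        have hnonempty : Nonempty ↥D := by
          obtain ⟨v, hv⟩ := (e i).exists_rep
          exact ⟨⟨v, by rw [hD, ConnectedComponent.mem_supp_iff]; exact hv⟩⟩
        refine ⟨?_⟩
        rintro ⟨u, hu⟩ ⟨v, hv⟩
        have hreach : K.Reachable u v := by
          rw [hD, ConnectedComponent.mem_supp_iff] at hu hv
          exact ConnectedComponent.exact (hu.trans hv.symm)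
        have lift : ∀ (u v : V) (_ : K.Walk u v) (hu : u ∈ D) (hv : v ∈ D),
            (K.induce D).Reachable ⟨u, hu⟩ ⟨v, hv⟩ := by
          intro u v q
          induction q with
          | nil => intro hu hv; rfl
          | @cons u' y v' h q ih =>
            intro hu hv
            have hy : y ∈ D := by
              rw [hD, ConnectedComponent.mem_supp_iff] at hu ⊢
              rw [← hu]
              exact (ConnectedComponent.connectedComponentMk_eq_of_adj h).symm
            have hadj : (K.induce D).Adj ⟨u', hu⟩ ⟨y, hy⟩ := h
            exact hadj.reachable.trans (ih hy hv)
        exact lift u v hreach.some hu hv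
      -- H has a triangle
      have ht12 : H.Adj x y := by rw [compl_adj]; exact ⟨hxy, nxy⟩
      have ht23 : H.Adj y z := by rw [compl_adj]; exact ⟨hyz, nyz⟩
      have ht13 : H.Adj x z := by rw [compl_adj]; exact ⟨hxz, nxz⟩
      have key := paw_key H hpaw hconn ht12 ht23 ht13
      -- J is P₃-free
      have p3free : ∀ a b c : ↥D, a ≠ b → ¬J.Adj a b → J.Adj c a → J.Adj c b → False := by
        intro a b c hab hnab hca hcb
        exact key a b c (by rw [compl_adj]; exact ⟨hab, hnab⟩)
          (fun h => (compl_adj J _ _).mp h |>.2 hca)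
          (fun h => (compl_adj J _ _).mp h |>.2 hcb)
          hca.ne hcb.ne
      -- components of J are cliques
      intro c'
      intro a ha b hb hne
      rw [ConnectedComponent.mem_supp_iff] at ha hb
      have hreach : J.Reachable a b := ConnectedComponent.exact (ha.trans hb.symm)
      have walkAdj : ∀ (a b : ↥D) (_ : J.Walk a b), a = b ∨ J.Adj a b := by
        intro a b q
        induction q with
        | nil => exact Or.inl rfl
        | @cons a' y b' h q ih =>
          rcases ih with rfl | hyb
          · exact Or.inr h
          · by_cases hab : a' = b'
            · exact Or.inl hab
            by_cases hadj : J.Adj a' b'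
            · exact Or.inr hadj
            exact absurd (p3free a' b' y hab hadj h.symm hyb) not_false
      rcases walkAdj a b hreach.some with rfl | hadj
      · exact absurd rfl hne
      · exact hadj
    · left
      constructor
      intro f
      apply htrip
      refine ⟨f 0, f 1, f 2, f.injective.ne (by decide), f.injective.ne (by decide),
        f.injective.ne (by decide), ?_, ?_, ?_⟩ <;>
      · rw [f.map_adj_iff]; exact fun h => h.elim  -- bot adj is false
  · intro i j hij a ha b hb
    rw [ConnectedComponent.mem_supp_iff] at ha hb
    by_contra hG
    have hab : a ≠ b := by
      rintro rfl
      exact hij (e.injective (ha.symm.trans hb))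
    have : K.Adj a b := by rw [hK, compl_adj]; exact ⟨hab, hG⟩
    exact hij (e.injective (ha.symm.trans
      ((ConnectedComponent.connectedComponentMk_eq_of_adj this).trans hb)))
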